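/- Let f ∈ ℂ[X] be a nonzero polynomial, n ∈ ℕ, and let φ_0, …, φ_n ∈ ℂ[X] be polynomials with deg φ_k = k for each k and ⟨φ_j · f, φ_k · f⟩ = δ_{jk} (Kronecker delta) for all 0 ≤ j, k ≤ n. Let A_n be the leading coefficient of φ_n and assume φ_n(0) ≠ 0. Then the degree-n OPA p_n to 1/f satisfies p_n = conj(f(0)) · A_n · (φ_n)*_n, where (φ_n)*_n is the conjugate-reversal of φ_n of order n. -/

import Mathlib

open Polynomial

/-- The H² inner product of two polynomials: `⟨g, h⟩ = ∑ₖ gₖ conj(hₖ)`. -/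
noncomputable def hinner (g h : Polynomial ℂ) : ℂ :=
  ∑ᶠ k : ℕ, g.coeff k * (starRingEnd ℂ) (h.coeff k)

/-- The squared H² norm of a polynomial: `‖g‖² = ∑ₖ |gₖ|²`. -/
noncomputable def hnormSq (g : Polynomial ℂ) : ℝ :=
  ∑ᶠ k : ℕ, ‖g.coeff k‖ ^ 2

/-- `p` is the degree-`n` optimal polynomial approximant (OPA) to `1/f` in H². -/
def IsOPA (f : Polynomial ℂ) (n : ℕ) (p : Polynomial ℂ) : Prop :=
  p.degree ≤ (n : ℕ) ∧
    ∀ q : Polynomial ℂ, q.degree ≤ (n : ℕ) → hnormSq (1 - p * f) ≤ hnormSq (1 - q * f)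

/-- Conjugate-reversal of order `N`: `q*_N(X) = ∑_{j=0}^N conj(q_{N-j}) Xʲ`. -/
noncomputable def cRev (N : ℕ) (q : Polynomial ℂ) : Polynomial ℂ :=
  ∑ j ∈ Finset.range (N + 1), Polynomial.C ((starRingEnd ℂ) (q.coeff (N - j))) * Polynomial.X ^ j

open Finset
lemma hinner_eq_sum (g h : Polynomial ℂ) (N : ℕ) (hg : g.natDegree < N) :
    hinner g h = ∑ k ∈ Finset.range N, g.coeff k * (starRingEnd ℂ) (h.coeff k) := by
  apply finsum_eq_sum_of_support_subset
  intro k hk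
  simp only [Function.mem_support] at hk
  simp only [Finset.coe_range, Set.mem_Iio]
  by_contra h'
  push_neg at h'
  exact hk (by rw [g.coeff_eq_zero_of_natDegree_lt (lt_of_lt_of_le hg h'), zero_mul])

lemma hnormSq_eq_sum (g : Polynomial ℂ) (N : ℕ) (hg : g.natDegree < N) :
    hnormSq g = ∑ k ∈ Finset.range N, ‖g.coeff k‖ ^ 2 := by
  apply finsum_eq_sum_of_support_subset
  intro k hk
  simp only [Function.mem_support] at hk
  simp only [Finset.coe_range, Set.mem_Iio]
  by_contra h'
  push_neg at h'
  exact hk (by rw [g.coeff_eq_zero_of_natDegree_lt (lt_of_lt_of_le hg h'), norm_zero]; norm_num)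

lemma hinner_conj (g h : Polynomial ℂ) : hinner g h = (starRingEnd ℂ) (hinner h g) := by
  set N := max (g.natDegree + 1) (h.natDegree + 1) with hN
  rw [hinner_eq_sum g h N (by omega), hinner_eq_sum h g N (by omega), map_sum]
  apply Finset.sum_congr rfl
  intro k _
  rw [map_mul, RingHomInvPair.comp_apply_eq, mul_comm]

lemma hinner_add_left (a b h : Polynomial ℂ) : hinner (a + b) h = hinner a h + hinner b h := by
  set N := max ((a+b).natDegree + 1) (max (a.natDegree + 1) (b.natDegree + 1)) with hN
  rw [hinner_eq_sum (a+b) h N (by omega), hinner_eq_sum a h N (by omega),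
    hinner_eq_sum b h N (by omega), ← Finset.sum_add_distrib]
  apply Finset.sum_congr rfl
  intro k _
  rw [Polynomial.coeff_add, add_mul]

lemma hinner_C_mul_left (c : ℂ) (a h : Polynomial ℂ) :
    hinner (Polynomial.C c * a) h = c * hinner a h := by
  set N := max ((Polynomial.C c * a).natDegree + 1) (a.natDegree + 1) with hN
  rw [hinner_eq_sum _ h N (by omega), hinner_eq_sum a h N (by omega), Finset.mul_sum]
  apply Finset.sum_congr rfl
  intro k _
  rw [Polynomial.coeff_C_mul, mul_assoc]

lemma hinner_sub_left (a b h : Polynomial ℂ) : hinner (a - b) h = hinner a h - hinner b h := by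
  have := hinner_add_left (a - b) b h
  rw [sub_add_cancel] at this
  rw [this]; ring

lemma hinner_add_right (g a b : Polynomial ℂ) : hinner g (a + b) = hinner g a + hinner g b := by
  rw [hinner_conj, hinner_add_left, map_add, ← hinner_conj, ← hinner_conj]

lemma hinner_sub_right (g a b : Polynomial ℂ) : hinner g (a - b) = hinner g a - hinner g b := by
  rw [hinner_conj, hinner_sub_left, map_sub, ← hinner_conj, ← hinner_conj]

lemma hinner_C_mul_right (c : ℂ) (g a : Polynomial ℂ) :
    hinner g (Polynomial.C c * a) = (starRingEnd ℂ) c * hinner g a := by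
  rw [hinner_conj, hinner_C_mul_left, map_mul, ← hinner_conj]

lemma hinner_self (g : Polynomial ℂ) : hinner g g = ((hnormSq g : ℝ) : ℂ) := by
  rw [hinner_eq_sum g g (g.natDegree + 1) (by omega),
    hnormSq_eq_sum g (g.natDegree + 1) (by omega)]
  rw [Complex.ofReal_sum]
  apply Finset.sum_congr rfl
  intro k _
  rw [Complex.mul_conj, Complex.sq_norm]

lemma hnormSq_nonneg (g : Polynomial ℂ) : 0 ≤ hnormSq g := by
  rw [hnormSq_eq_sum g (g.natDegree + 1) (by omega)]
  exact Finset.sum_nonneg fun k _ => by positivity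

lemma eq_zero_of_hnormSq_eq_zero (g : Polynomial ℂ) (h : hnormSq g = 0) : g = 0 := by
  rw [hnormSq_eq_sum g (g.natDegree + 1) (by omega)] at h
  have := (Finset.sum_eq_zero_iff_of_nonneg (fun k _ => by positivity)).1 h
  ext k
  by_cases hk : k < g.natDegree + 1
  · have := this k (Finset.mem_range.2 hk)
    simpa using this
  · have hlt : g.natDegree < k := by omega
    simp [g.coeff_eq_zero_of_natDegree_lt hlt]

lemma hnormSq_add (a b : Polynomial ℂ) :
    hnormSq (a + b) = hnormSq a + 2 * (hinner a b).re + hnormSq b := by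
  have key : hinner (a+b) (a+b) = hinner a a + hinner b b + (hinner a b + (starRingEnd ℂ) (hinner a b)) := by
    rw [hinner_add_left, hinner_add_right, hinner_add_right, ← hinner_conj]
    ring
  have := congrArg Complex.re key
  rw [hinner_self, hinner_self, hinner_self] at this
  simp only [Complex.add_re, Complex.ofReal_re, Complex.conj_re] at this
  rw [this]; ring

lemma hnormSq_C_mul (c : ℂ) (a : Polynomial ℂ) :
    hnormSq (Polynomial.C c * a) = ‖c‖ ^ 2 * hnormSq a := by
  have key : hinner (Polynomial.C c * a) (Polynomial.C c * a)
      = ((‖c‖ ^ 2 : ℝ) : ℂ) * hinner a a := by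
    rw [hinner_C_mul_left, hinner_C_mul_right, ← mul_assoc, Complex.mul_conj]
    norm_cast
    rw [Complex.sq_norm]
  rw [hinner_self, hinner_self, ← Complex.ofReal_mul] at key
  exact_mod_cast key


lemma opa_orth (f : Polynomial ℂ) (n : ℕ) (p : Polynomial ℂ) (hp : IsOPA f n p)
    (s : Polynomial ℂ) (hs : s.degree ≤ (n : ℕ)) : hinner (1 - p * f) (s * f) = 0 := by
  set r := 1 - p * f with hr
  set c := hinner r (s * f) with hc
  by_contra hc0
  set u := s * f with hu
  have habs : (0:ℝ) < ‖c‖ ^ 2 := pow_pos (norm_pos_iff.mpr hc0) 2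
  -- competitor
  have key : ∀ ε : ℝ, 0 < ε → 2 * (ε * ‖c‖ ^ 2) ≤ ε^2 * ‖c‖ ^2 * hnormSq u := by
    intro ε hε
    have hCs : (Polynomial.C ((ε:ℂ) * c) * s).degree ≤ (n : ℕ) := by
      refine le_trans (Polynomial.degree_mul_le _ _) ?_
      refine le_trans (add_le_add Polynomial.degree_C_le hs) ?_
      simp
    have hq : (p + Polynomial.C ((ε:ℂ) * c) * s).degree ≤ (n : ℕ) :=
      le_trans (Polynomial.degree_add_le _ _) (max_le hp.1 hCs)
    have := hp.2 _ hq
    have hexp : 1 - (p + Polynomial.C ((ε:ℂ) * c) * s) * f = r + Polynomial.C (-((ε:ℂ)*c)) * u := by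
      rw [hr, hu]; push_cast; ring_nf; rw [map_neg]; ring
    rw [hexp, hnormSq_add, hnormSq_C_mul] at this
    have hre : (hinner r (Polynomial.C (-((ε:ℂ)*c)) * u)).re = -(ε * ‖c‖ ^ 2) := by
      rw [hinner_C_mul_right, ← hc]
      have h1 : (starRingEnd ℂ) (-((ε:ℂ)*c)) * c = -((ε:ℂ) * ((Complex.normSq c : ℝ) : ℂ)) := by
        rw [map_neg, map_mul, Complex.conj_ofReal, neg_mul, mul_assoc,
          ← Complex.normSq_eq_conj_mul_self]
      rw [h1, ← Complex.ofReal_mul, ← Complex.ofReal_neg, Complex.ofReal_re,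
        Complex.normSq_eq_norm_sq]
    rw [hre] at this
    have habsneg : ‖(-((ε:ℂ)*c))‖ ^ 2 = ε^2 * ‖c‖ ^2 := by
      rw [norm_neg, norm_mul, mul_pow, Complex.norm_real, Real.norm_eq_abs, sq_abs]
    rw [habsneg] at this
    nlinarith [this]
  have hun := hnormSq_nonneg u
  rcases eq_or_lt_of_le hun with hU0 | hU
  · have h1 := key 1 one_pos
    rw [← hU0] at h1
    nlinarith [habs]
  · have h1 := key (1 / hnormSq u) (by positivity)
    field_simp at h1
    nlinarith [h1, mul_pos habs (pow_pos hU 2)]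

lemma hinner_zero_left (h : Polynomial ℂ) : hinner 0 h = 0 := by
  have := hinner_sub_left 0 0 h
  simpa using this

lemma hinner_sum_left {α : Type*} (s : Finset α) (F : α → Polynomial ℂ) (h : Polynomial ℂ) :
    hinner (∑ i ∈ s, F i) h = ∑ i ∈ s, hinner (F i) h := by
  induction s using Finset.cons_induction with
  | empty => simpa using hinner_zero_left h
  | cons a s ha ih => rw [Finset.sum_cons, Finset.sum_cons, hinner_add_left, ih]

lemma hinner_sum_right {α : Type*} (g : Polynomial ℂ) (s : Finset α) (F : α → Polynomial ℂ) :
    hinner g (∑ i ∈ s, F i) = ∑ i ∈ s, hinner g (F i) := by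
  rw [hinner_conj, hinner_sum_left, map_sum]
  exact Finset.sum_congr rfl fun i _ => (hinner_conj g (F i)).symm


lemma cRev_coeff (N : ℕ) (q : Polynomial ℂ) (k : ℕ) :
    (cRev N q).coeff k = if k ≤ N then (starRingEnd ℂ) (q.coeff (N - k)) else 0 := by
  rw [cRev, Polynomial.finset_sum_coeff]
  simp only [Polynomial.coeff_C_mul, Polynomial.coeff_X_pow, mul_ite, mul_one, mul_zero]
  rw [Finset.sum_ite_eq (Finset.range (N+1)) k]
  simp [Nat.lt_succ_iff]

lemma cRev_natDegree_le (N : ℕ) (q : Polynomial ℂ) : (cRev N q).natDegree ≤ N := by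
  rw [Polynomial.natDegree_le_iff_coeff_eq_zero]
  intro m hm
  rw [cRev_coeff, if_neg (by omega)]

lemma cRev_cRev (N : ℕ) (q : Polynomial ℂ) (h : q.natDegree ≤ N) : cRev N (cRev N q) = q := by
  ext k
  rw [cRev_coeff]
  by_cases hk : k ≤ N
  · rw [if_pos hk, cRev_coeff, if_pos (Nat.sub_le _ _)]
    rw [Nat.sub_sub_self hk, RingHomInvPair.comp_apply_eq]
  · rw [if_neg hk, eq_comm]
    exact q.coeff_eq_zero_of_natDegree_lt (by omega)

lemma cRev_eq_reflect (N : ℕ) (q : Polynomial ℂ) (h : q.natDegree ≤ N) :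
    cRev N q = Polynomial.reflect N (q.map (starRingEnd ℂ)) := by
  ext k
  rw [cRev_coeff, Polynomial.coeff_reflect, Polynomial.coeff_map]
  by_cases hk : k ≤ N
  · rw [if_pos hk, Polynomial.revAt_le hk]
  · rw [if_neg hk, Polynomial.revAt_eq_self_of_lt (by omega),
      q.coeff_eq_zero_of_natDegree_lt (by omega), map_zero]

lemma cRev_mul (x y : Polynomial ℂ) (M K : ℕ) (hx : x.natDegree ≤ M) (hy : y.natDegree ≤ K) :
    cRev (M + K) (x * y) = cRev M x * cRev K y := by
  rw [cRev_eq_reflect _ _ (le_trans (Polynomial.natDegree_mul_le) (add_le_add hx hy)),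
    cRev_eq_reflect _ _ hx, cRev_eq_reflect _ _ hy, Polynomial.map_mul]
  exact Polynomial.reflect_mul _ _ (le_trans Polynomial.natDegree_map_le hx)
    (le_trans Polynomial.natDegree_map_le hy)

lemma cRev_X_pow (N m : ℕ) (h : m ≤ N) : cRev N ((Polynomial.X : Polynomial ℂ)^m) = Polynomial.X^(N-m) := by
  ext k
  rw [cRev_coeff]
  simp only [Polynomial.coeff_X_pow]
  by_cases hk : k ≤ N
  · rw [if_pos hk]
    by_cases he : N - k = m
    · rw [if_pos he, if_pos (by omega), map_one]
    · rw [if_neg he, if_neg (by omega), map_zero]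
  · rw [if_neg hk, if_neg (by omega), eq_comm]

-- E1
lemma hinner_cRev (u v : Polynomial ℂ) (N : ℕ) :
    hinner u (cRev N v) = (u * v).coeff N := by
  rw [hinner_eq_sum u _ (max (u.natDegree + 1) (N + 1)) (by omega),
    Polynomial.coeff_mul, Finset.Nat.sum_antidiagonal_eq_sum_range_succ_mk]
  rw [← Finset.sum_subset (Finset.range_subset_range.2 (le_max_right (u.natDegree+1) (N+1)))]
  · apply Finset.sum_congr rfl
    intro k hk
    rw [Finset.mem_range, Nat.lt_succ_iff] at hk
    rw [cRev_coeff, if_pos hk, RingHomInvPair.comp_apply_eq]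
  · intro k _ hk
    rw [Finset.mem_range, Nat.lt_succ_iff] at hk
    rw [cRev_coeff, if_neg hk, map_zero, mul_zero]

section Main
variable (f : Polynomial ℂ) (n : ℕ) (φ : ℕ → Polynomial ℂ)

lemma ortho_aux (hdeg : ∀ k ≤ n, (φ k).degree = (k : ℕ))
    (horth : ∀ j ≤ n, ∀ k ≤ n, hinner (φ j * f) (φ k * f) = if j = k then 1 else 0) :
    ∀ (m : ℕ) (q : Polynomial ℂ), q.natDegree ≤ m → q.degree < (n : ℕ) →
      hinner (q * f) (φ n * f) = 0 := by
  intro m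
  induction m with
  | zero =>
    intro q hq hdlt
    rcases Nat.eq_zero_or_pos n with hn | hn
    · subst hn
      have hq0 : q = 0 := by
        ext k
        simp only [Polynomial.coeff_zero]
        exact (Polynomial.degree_lt_iff_coeff_zero q 0).1 hdlt k (Nat.zero_le k)
      rw [hq0, zero_mul, hinner_zero_left]
    · have hφ0 : (φ 0).degree = ((0 : ℕ) : WithBot ℕ) := hdeg 0 (Nat.zero_le n)
      set b := (φ 0).coeff 0 with hb
      have hbne : b ≠ 0 := Polynomial.coeff_ne_zero_of_eq_degree hφ0
      have hφ0C : φ 0 = Polynomial.C b := by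
        have := Polynomial.eq_C_of_degree_le_zero (le_of_eq hφ0)
        simpa using this
      have hqC : q = Polynomial.C (q.coeff 0) := Polynomial.eq_C_of_natDegree_le_zero hq
      have : q = Polynomial.C (q.coeff 0 / b) * φ 0 := by
        rw [hφ0C, ← Polynomial.C_mul, div_mul_cancel₀ _ hbne, ← hqC]
      rw [this, mul_assoc, hinner_C_mul_left, horth 0 (Nat.zero_le n) n le_rfl,
        if_neg (by omega), mul_zero]
  | succ m ih =>
    intro q hq hdlt
    by_cases hc : q.coeff (m + 1) = 0
    · refine ih q ?_ hdlt
      rw [Polynomial.natDegree_le_iff_coeff_eq_zero] at hq ⊢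
      intro k hk
      rcases Nat.lt_or_ge (m+1) k with h' | h'
      · exact hq k h'
      · have : k = m + 1 := by omega
        rw [this]; exact hc
    · have hm1 : ((m+1 : ℕ) : WithBot ℕ) ≤ q.degree := Polynomial.le_degree_of_ne_zero hc
      have hm1n : m + 1 < n := by exact_mod_cast lt_of_le_of_lt hm1 hdlt
      have hdegφ : (φ (m+1)).degree = ((m+1 : ℕ) : WithBot ℕ) := hdeg _ (le_of_lt hm1n)
      set lc := (φ (m+1)).coeff (m+1) with hlc
      have hlcne : lc ≠ 0 := Polynomial.coeff_ne_zero_of_eq_degree hdegφ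
      set c := q.coeff (m+1) / lc with hcdef
      set q' := q - Polynomial.C c * φ (m+1) with hq'
      have hq'nd : q'.natDegree ≤ m := by
        rw [Polynomial.natDegree_le_iff_coeff_eq_zero]
        intro k hk
        rw [hq', Polynomial.coeff_sub, Polynomial.coeff_C_mul]
        rcases Nat.lt_or_ge (m+1) k with h' | h'
        · rw [Polynomial.coeff_eq_zero_of_natDegree_lt (lt_of_le_of_lt hq h'),
            Polynomial.coeff_eq_zero_of_degree_lt (by rw [hdegφ]; exact_mod_cast h'),
            mul_zero, sub_zero]
        · have hkm : k = m + 1 := by omega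
          rw [hkm, hcdef, ← hlc, div_mul_cancel₀ _ hlcne, sub_self]
      have hq'dlt : q'.degree < (n : ℕ) := by
        rw [Polynomial.degree_lt_iff_coeff_zero]
        intro k hk
        exact Polynomial.coeff_eq_zero_of_natDegree_lt (lt_of_le_of_lt hq'nd (by omega))
      have hsplit : q = q' + Polynomial.C c * φ (m+1) := by rw [hq']; ring
      rw [hsplit, add_mul, hinner_add_left, ih q' hq'nd hq'dlt, mul_assoc,
        hinner_C_mul_left, horth (m+1) (le_of_lt hm1n) n le_rfl, if_neg (by omega),
        mul_zero, add_zero]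

lemma hinner_coeff_div (hdeg : ∀ k ≤ n, (φ k).degree = (k : ℕ))
    (horth : ∀ j ≤ n, ∀ k ≤ n, hinner (φ j * f) (φ k * f) = if j = k then 1 else 0)
    (q : Polynomial ℂ) (hq : q.degree ≤ (n : ℕ)) :
    hinner (q * f) (φ n * f) = q.coeff n / (φ n).coeff n := by
  have hdegn : (φ n).degree = ((n:ℕ) : WithBot ℕ) := hdeg n le_rfl
  set A := (φ n).coeff n with hA
  have hAne : A ≠ 0 := Polynomial.coeff_ne_zero_of_eq_degree hdegn
  set q' := q - Polynomial.C (q.coeff n / A) * φ n with hq'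
  have hq'dlt : q'.degree < (n : ℕ) := by
    rw [Polynomial.degree_lt_iff_coeff_zero]
    intro k hk
    rw [hq', Polynomial.coeff_sub, Polynomial.coeff_C_mul]
    rcases Nat.lt_or_ge n k with h' | h'
    · have e1 : q.coeff k = 0 :=
        Polynomial.coeff_eq_zero_of_degree_lt (lt_of_le_of_lt hq (by exact_mod_cast h'))
      have e2 : (φ n).coeff k = 0 :=
        Polynomial.coeff_eq_zero_of_degree_lt (by rw [hdegn]; exact_mod_cast h')
      rw [e1, e2, mul_zero, sub_zero]
    · have hkn : k = n := by omega
      rw [hkn, ← hA, div_mul_cancel₀ _ hAne, sub_self]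
  have h1 : hinner (q' * f) (φ n * f) = 0 :=
    ortho_aux f n φ hdeg horth q'.natDegree q' le_rfl hq'dlt
  rw [hq', sub_mul, hinner_sub_left, mul_assoc, hinner_C_mul_left,
    horth n le_rfl n le_rfl, if_pos rfl, mul_one, sub_eq_zero] at h1
  exact h1


lemma key1 (a b : Polynomial ℂ) (hb : b.natDegree ≤ n) :
    hinner (a * f) (cRev n b * f) = (a * b * (f * cRev f.natDegree f)).coeff (n + f.natDegree) := by
  have h1 : cRev n b * f = cRev (n + f.natDegree) (b * cRev f.natDegree f) := by
    rw [cRev_mul b (cRev f.natDegree f) n f.natDegree hb (cRev_natDegree_le _ _),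
      cRev_cRev _ f le_rfl]
  rw [h1, hinner_cRev]
  congr 1
  ring

lemma key2 (hdeg : ∀ k ≤ n, (φ k).degree = (k : ℕ))
    (horth : ∀ j ≤ n, ∀ k ≤ n, hinner (φ j * f) (φ k * f) = if j = k then 1 else 0)
    (j : ℕ) (hj : j ≤ n) :
    hinner (cRev n (φ n) * f) (Polynomial.X ^ j * f)
      = if j = 0 then 1 / (φ n).coeff n else 0 := by
  have hφnd : (φ n).natDegree ≤ n :=
    Polynomial.natDegree_le_iff_degree_le.2 (le_of_eq (hdeg n le_rfl))
  have hx : (Polynomial.X : Polynomial ℂ) ^ j * f = cRev n (Polynomial.X ^ (n - j)) * f := by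
    rw [cRev_X_pow n (n - j) (Nat.sub_le _ _), Nat.sub_sub_self hj]
  rw [hx, key1 f n _ _ (by rw [Polynomial.natDegree_X_pow]; exact Nat.sub_le n j)]
  have h2 : hinner ((Polynomial.X : Polynomial ℂ) ^ (n - j) * f) (φ n * f)
      = ((Polynomial.X : Polynomial ℂ) ^ (n - j)).coeff n / (φ n).coeff n :=
    hinner_coeff_div f n φ hdeg horth _
      (by rw [Polynomial.degree_X_pow]; exact_mod_cast Nat.sub_le n j)
  have h3 : φ n * f = cRev n (cRev n (φ n)) * f := by rw [cRev_cRev n (φ n) hφnd]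
  rw [h3, key1 f n _ _ (cRev_natDegree_le _ _)] at h2
  rw [show cRev n (φ n) * Polynomial.X ^ (n-j) * (f * cRev f.natDegree f)
      = Polynomial.X ^ (n-j) * cRev n (φ n) * (f * cRev f.natDegree f) by ring, h2,
    Polynomial.coeff_X_pow]
  by_cases hj0 : j = 0
  · rw [if_pos hj0, if_pos (by omega), one_div]
  · rw [if_neg hj0, if_neg (by omega), zero_div]

theorem opa_main (hf : f ≠ 0)
    (hdeg : ∀ k ≤ n, (φ k).degree = (k : ℕ))
    (horth : ∀ j ≤ n, ∀ k ≤ n,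
      hinner (φ j * f) (φ k * f) = if j = k then 1 else 0)
    (hφn0 : (φ n).eval 0 ≠ 0)
    (p : Polynomial ℂ) (hp : IsOPA f n p) :
    p = Polynomial.C ((starRingEnd ℂ) (f.eval 0) * (φ n).leadingCoeff) * cRev n (φ n) := by
  classical
  have hdegn := hdeg n le_rfl
  have hφnne : φ n ≠ 0 := by
    intro h
    rw [h, Polynomial.degree_zero] at hdegn
    exact absurd hdegn (by simp)
  have hnat : (φ n).natDegree = n := Polynomial.natDegree_eq_of_degree_eq_some hdegn
  set A := (φ n).leadingCoeff with hAdef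
  have hAcoeff : A = (φ n).coeff n := by rw [hAdef, Polynomial.leadingCoeff, hnat]
  have hAne : A ≠ 0 := by rw [hAdef]; exact Polynomial.leadingCoeff_ne_zero.2 hφnne
  set c0 := (starRingEnd ℂ) (f.eval 0) with hc0
  set p' := Polynomial.C (c0 * A) * cRev n (φ n) with hp'
  have hcrevdeg : (cRev n (φ n)).degree ≤ (n : ℕ) :=
    Polynomial.natDegree_le_iff_degree_le.1 (cRev_natDegree_le n (φ n))
  have hp'deg : p'.degree ≤ (n : ℕ) := by
    rw [hp']
    refine le_trans (Polynomial.degree_mul_le _ _) ?_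
    refine le_trans (add_le_add Polynomial.degree_C_le hcrevdeg) ?_
    simp
  have key3 : ∀ j ≤ n, hinner (1 - p' * f) (Polynomial.X ^ j * f) = 0 := by
    intro j hj
    rw [hinner_sub_left]
    have h1 : hinner 1 ((Polynomial.X : Polynomial ℂ) ^ j * f)
        = (starRingEnd ℂ) (((Polynomial.X : Polynomial ℂ) ^ j * f).coeff 0) := by
      rw [hinner_eq_sum 1 _ 1 (by simp)]
      simp
    have hcoeff0 : ((Polynomial.X : Polynomial ℂ) ^ j * f).coeff 0
        = if j = 0 then f.coeff 0 else 0 := by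
      rw [mul_comm, Polynomial.coeff_mul_X_pow']
      by_cases hj0 : j = 0
      · simp [hj0]
      · rw [if_neg (by omega), if_neg hj0]
    have h2 : hinner (p' * f) ((Polynomial.X : Polynomial ℂ) ^ j * f)
        = (c0 * A) * (if j = 0 then 1 / (φ n).coeff n else 0) := by
      rw [hp', mul_assoc, hinner_C_mul_left, key2 f n φ hdeg horth j hj]
    rw [h1, h2, hcoeff0]
    by_cases hj0 : j = 0
    · rw [if_pos hj0, if_pos hj0, ← hAcoeff, hc0, ← Polynomial.coeff_zero_eq_eval_zero]
      field_simp
      simp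
    · rw [if_neg hj0, if_neg hj0, map_zero, mul_zero, sub_zero]
  have key4 : ∀ j ≤ n, hinner ((p - p') * f) (Polynomial.X ^ j * f) = 0 := by
    intro j hj
    have ho := opa_orth f n p hp (Polynomial.X ^ j)
      (le_trans (le_of_eq (Polynomial.degree_X_pow j)) (by exact_mod_cast hj))
    have hk := key3 j hj
    have hdiff : (p - p') * f = (1 - p' * f) - (1 - p * f) := by ring
    rw [hdiff, hinner_sub_left, hk, ho, sub_zero]
  have hqdeg : (p - p').natDegree ≤ n :=
    Polynomial.natDegree_le_iff_degree_le.2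
      (le_trans (Polynomial.degree_sub_le _ _) (max_le hp.1 hp'deg))
  have hsum : (p - p') * f
      = ∑ j ∈ Finset.range (n+1), Polynomial.C ((p - p').coeff j) * (Polynomial.X ^ j * f) := by
    conv_lhs => rw [Polynomial.as_sum_range' (p - p') (n+1) (by omega)]
    rw [Finset.sum_mul]
    exact Finset.sum_congr rfl fun j _ => by rw [← Polynomial.C_mul_X_pow_eq_monomial]; ring
  have hself : hinner ((p - p') * f) ((p - p') * f) = 0 := by
    nth_rewrite 2 [hsum]
    rw [hinner_sum_right]
    apply Finset.sum_eq_zero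
    intro j hjr
    rw [Finset.mem_range, Nat.lt_succ_iff] at hjr
    rw [hinner_C_mul_right, key4 j hjr, mul_zero]
  have hzero : (p - p') * f = 0 := by
    apply eq_zero_of_hnormSq_eq_zero
    have h := hinner_self ((p - p') * f)
    rw [hself] at h
    exact_mod_cast h.symm
  rcases mul_eq_zero.1 hzero with h | h
  · rw [sub_eq_zero] at h
    rw [h, hp']
  · exact absurd h hf


end Main

theorem opa_eq_reversed_opuc (f : Polynomial ℂ) (hf : f ≠ 0) (n : ℕ)
    (φ : ℕ → Polynomial ℂ) (hdeg : ∀ k ≤ n, (φ k).degree = (k : ℕ))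
    (horth : ∀ j ≤ n, ∀ k ≤ n,
      hinner (φ j * f) (φ k * f) = if j = k then 1 else 0)
    (hφn0 : (φ n).eval 0 ≠ 0)
    (p : Polynomial ℂ) (hp : IsOPA f n p) :
    p = Polynomial.C ((starRingEnd ℂ) (f.eval 0) * (φ n).leadingCoeff) * cRev n (φ n) :=
  opa_main f n φ hf hdeg horth hφn0 p hp
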